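/- If M is a quasi-injective polyform module, then for each natural number n, M^n is H-supplemented if and only if every direct summand of M^n is H-supplemented. -/

import Mathlib

universe u v

/-- `N` is a small (superfluous) submodule of `M`. -/
def SmallSub (R : Type v) [Ring R] {M : Type u} [AddCommGroup M] [Module R M]
    (N : Submodule R M) : Prop :=
  ∀ X : Submodule R M, N ⊔ X = ⊤ → X = ⊤

/-- `D` is a direct summand of `M`. -/
def IsDirectSummand (R : Type v) [Ring R] {M : Type u} [AddCommGroup M] [Module R M]
    (D : Submodule R M) : Prop :=
  ∃ D' : Submodule R M, IsCompl D D'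

/-- `M` is H-supplemented: for every submodule `X` there is a direct summand `D`
with `(X+D)/D ≪ M/D` and `(X+D)/X ≪ M/X`. -/
def HSupplemented (R : Type v) [Ring R] (M : Type u) [AddCommGroup M] [Module R M] : Prop :=
  ∀ X : Submodule R M, ∃ D : Submodule R M, IsDirectSummand R D ∧
    SmallSub R ((X ⊔ D).map D.mkQ) ∧ SmallSub R ((X ⊔ D).map X.mkQ)

/-- Condition (D3). -/
def CondD3 (R : Type v) [Ring R] (M : Type u) [AddCommGroup M] [Module R M] : Prop :=
  ∀ K L : Submodule R M, IsDirectSummand R K → IsDirectSummand R L → K ⊔ L = ⊤ →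
    IsDirectSummand R (K ⊓ L)

/-- `N` is an essential submodule of `M`. -/
def EssentialSub (R : Type v) [Ring R] {M : Type u} [AddCommGroup M] [Module R M]
    (N : Submodule R M) : Prop :=
  ∀ X : Submodule R M, N ⊓ X = ⊥ → X = ⊥

/-- `N` is a rational (dense) submodule of `M`. -/
def RationalSub (R : Type v) [Ring R] {M : Type u} [AddCommGroup M] [Module R M]
    (N : Submodule R M) : Prop :=
  ∀ X : Submodule R M, N ≤ X → ∀ f : ↥X →ₗ[R] M, (∀ x : ↥X, (x : M) ∈ N → f x = 0) → f = 0

/-- `M` is polyform: every essential submodule is rational. -/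
def Polyform (R : Type v) [Ring R] (M : Type u) [AddCommGroup M] [Module R M] : Prop :=
  ∀ N : Submodule R M, EssentialSub R N → RationalSub R N

/-- `M` is quasi-injective. -/
def QuasiInjective (R : Type v) [Ring R] (M : Type u) [AddCommGroup M] [Module R M] : Prop :=
  ∀ (N : Submodule R M) (f : ↥N →ₗ[R] M), ∃ g : M →ₗ[R] M, ∀ x : ↥N, g x = f x

section Generic
variable {R : Type v} [Ring R] {A : Type u} [AddCommGroup A] [Module R A]

lemma smallSub_map_mkQ_iff (W P : Submodule R A) :
    SmallSub R (W.map P.mkQ) ↔ ∀ Y : Submodule R A, P ≤ Y → W ⊔ Y = ⊤ → Y = ⊤ := by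
  constructor
  · intro hs Y hPY hWY
    have h1 : (W.map P.mkQ) ⊔ (Y.map P.mkQ) = ⊤ := by
      rw [← Submodule.map_sup, hWY, Submodule.map_top, Submodule.range_mkQ]
    have h2 := hs _ h1
    have h3 : Submodule.comap P.mkQ (Submodule.map P.mkQ Y) = ⊤ := by
      rw [h2, Submodule.comap_top]
    rw [Submodule.comap_map_mkQ, sup_eq_right.mpr hPY] at h3
    exact h3
  · intro h T hT
    set Y := Submodule.comap P.mkQ T with hY
    have hPY : P ≤ Y := by
      intro x hx
      simp only [hY, Submodule.mem_comap]
      have : P.mkQ x = 0 := by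
        rw [← LinearMap.mem_ker, Submodule.ker_mkQ]; exact hx
      rw [this]; exact T.zero_mem
    have hmapY : Submodule.map P.mkQ Y = T := by
      rw [hY, Submodule.map_comap_eq, Submodule.range_mkQ, top_inf_eq]
    have h4 : Submodule.map P.mkQ (W ⊔ Y) = ⊤ := by
      rw [Submodule.map_sup, hmapY, hT]
    have h5 : Submodule.comap P.mkQ (Submodule.map P.mkQ (W ⊔ Y)) = ⊤ := by
      rw [h4, Submodule.comap_top]
    rw [Submodule.comap_map_mkQ] at h5
    have h6 : P ⊔ (W ⊔ Y) = W ⊔ Y := by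
      rw [sup_eq_right]; exact le_trans hPY le_sup_right
    rw [h6] at h5
    have := h Y hPY h5
    rw [← hmapY, this, Submodule.map_top, Submodule.range_mkQ]

def LatticeH (R : Type v) [Ring R] (A : Type u) [AddCommGroup A] [Module R A] : Prop :=
  ∀ X : Submodule R A, ∃ F : Submodule R A, IsDirectSummand R F ∧
    (∀ Y, F ≤ Y → X ⊔ Y = ⊤ → Y = ⊤) ∧ (∀ Y, X ≤ Y → F ⊔ Y = ⊤ → Y = ⊤)

lemma hsupp_iff_latticeH : HSupplemented R A ↔ LatticeH R A := by
  constructor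
  · intro h X
    obtain ⟨D, hD, s1, s2⟩ := h X
    rw [smallSub_map_mkQ_iff] at s1 s2
    refine ⟨D, hD, ?_, ?_⟩
    · intro Y hDY hXY
      exact s1 Y hDY (by rw [sup_assoc, sup_eq_right.mpr hDY, hXY])
    · intro Y hXY hDY
      refine s2 Y hXY ?_
      rw [sup_right_comm, sup_eq_right.mpr hXY, sup_comm, hDY]
  · intro h X
    obtain ⟨F, hF, c1, c2⟩ := h X
    refine ⟨F, hF, ?_, ?_⟩
    · rw [smallSub_map_mkQ_iff]
      intro Y hFY hXY
      have : X ⊔ Y = ⊤ := by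
        rw [sup_assoc, sup_eq_right.mpr hFY] at hXY; exact hXY
      exact c1 Y hFY this
    · rw [smallSub_map_mkQ_iff]
      intro Y hXY hW
      have : F ⊔ Y = ⊤ := by
        rw [sup_right_comm, sup_eq_right.mpr hXY, sup_comm] at hW; exact hW
      exact c2 Y hXY this

/-- lattice form of H-supplementedness of a submodule `D`, inside the ambient lattice. -/
def HSuppOn (R : Type v) [Ring R] {A : Type u} [AddCommGroup A] [Module R A]
    (D : Submodule R A) : Prop :=
  ∀ X : Submodule R A, X ≤ D → ∃ F : Submodule R A, F ≤ D ∧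
    (∃ F' : Submodule R A, F' ≤ D ∧ F ⊓ F' = ⊥ ∧ F ⊔ F' = D) ∧
    (∀ Y, F ≤ Y → Y ≤ D → X ⊔ Y = D → Y = D) ∧
    (∀ Y, X ≤ Y → Y ≤ D → F ⊔ Y = D → Y = D)

lemma latticeH_subtype_iff (D : Submodule R A) : LatticeH R ↥D ↔ HSuppOn R D := by
  have inj := D.injective_subtype
  have mapc : ∀ X : Submodule R A, X ≤ D →
      Submodule.map D.subtype (Submodule.comap D.subtype X) = X := by
    intro X hX; rw [Submodule.map_comap_subtype, inf_eq_right.mpr hX]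
  have cmap : ∀ T : Submodule R ↥D, Submodule.comap D.subtype (Submodule.map D.subtype T) = T :=
    fun T => Submodule.comap_map_eq_of_injective inj T
  have mtop : Submodule.map D.subtype ⊤ = D := Submodule.map_subtype_top D
  have mle : ∀ T : Submodule R ↥D, Submodule.map D.subtype T ≤ D :=
    fun T => (Submodule.map_mono le_top).trans mtop.le
  have minj : ∀ T T' : Submodule R ↥D,
      Submodule.map D.subtype T = Submodule.map D.subtype T' → T = T' :=
    fun T T' h => Submodule.map_injective_of_injective inj h
  constructor
  · intro h X hX
    obtain ⟨Ft, ⟨Ft', hc⟩, c1, c2⟩ := h (Submodule.comap D.subtype X)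
    refine ⟨Ft.map D.subtype, mle _, ⟨Ft'.map D.subtype, mle _, ?_, ?_⟩, ?_, ?_⟩
    · rw [← Submodule.map_inf _ inj, disjoint_iff.mp hc.disjoint, Submodule.map_bot]
    · rw [← Submodule.map_sup, codisjoint_iff.mp hc.codisjoint, mtop]
    · intro Y hFY hYD hXY
      have h1 : Ft ≤ Submodule.comap D.subtype Y := by
        rw [← cmap Ft]; exact Submodule.comap_mono hFY
      have h2 : Submodule.comap D.subtype X ⊔ Submodule.comap D.subtype Y = ⊤ := by
        apply minj; rw [Submodule.map_sup, mapc X hX, mapc Y hYD, mtop, hXY]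
      have := c1 _ h1 h2
      rw [← mapc Y hYD, this, mtop]
    · intro Y hXY hYD hFY
      have h1 : Submodule.comap D.subtype X ≤ Submodule.comap D.subtype Y :=
        Submodule.comap_mono hXY
      have h2 : Ft ⊔ Submodule.comap D.subtype Y = ⊤ := by
        apply minj
        rw [Submodule.map_sup, mapc Y hYD, mtop]
        exact hFY
      have := c2 _ h1 h2
      rw [← mapc Y hYD, this, mtop]
  · intro h Xt
    obtain ⟨F, hFD, ⟨F', hF'D, hinf, hsup⟩, c1, c2⟩ := h (Xt.map D.subtype) (mle _)
    refine ⟨F.comap D.subtype, ⟨F'.comap D.subtype, ?_⟩, ?_, ?_⟩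
    · constructor
      · rw [disjoint_iff]
        apply minj
        rw [Submodule.map_inf _ inj, mapc _ hFD, mapc _ hF'D, hinf, Submodule.map_bot]
      · rw [codisjoint_iff]
        apply minj
        rw [Submodule.map_sup, mapc _ hFD, mapc _ hF'D, hsup, mtop]
    · intro Yt hFY hXY
      have h1 : F ≤ Yt.map D.subtype := by
        rw [← mapc F hFD]; exact Submodule.map_mono hFY
      have h2 : Xt.map D.subtype ⊔ Yt.map D.subtype = D := by
        rw [← Submodule.map_sup, hXY, mtop]
      have := c1 _ h1 (mle _) h2
      apply minj
      rw [this, mtop]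
    · intro Yt hXY hFY
      have h1 : Xt.map D.subtype ≤ Yt.map D.subtype := Submodule.map_mono hXY
      have h2 : F ⊔ Yt.map D.subtype = D := by
        rw [← mapc F hFD, ← Submodule.map_sup, hFY, mtop]
      have := c2 _ h1 (mle _) h2
      apply minj
      rw [this, mtop]

lemma compl_exists (L : Submodule R A) :
    ∃ C : Submodule R A, L ⊓ C = ⊥ ∧ ∀ X : Submodule R A, (L ⊔ C) ⊓ X = ⊥ → X = ⊥ := by
  obtain ⟨C, -, hmax⟩ := zorn_le_nonempty₀ {C : Submodule R A | L ⊓ C = ⊥}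
    (fun c hc hchain y hy => by
      refine ⟨sSup c, ?_, fun z hz => le_sSup hz⟩
      rw [Set.mem_setOf_eq, eq_bot_iff]
      rintro x ⟨hxL, hxS⟩
      obtain ⟨C', hC', hxC'⟩ := (Submodule.mem_sSup_of_directed ⟨y, hy⟩
        (hchain.directedOn)).mp hxS
      have := hc hC'
      rw [Set.mem_setOf_eq] at this
      rw [← this]; exact ⟨hxL, hxC'⟩)
    ⊥ (by simp)
  refine ⟨C, hmax.prop, fun X hX => ?_⟩
  have hLCX : L ⊓ (C ⊔ X) = ⊥ := by
    rw [eq_bot_iff]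
    rintro a ⟨haL, haCX⟩
    obtain ⟨c, hc, x, hx, rfl⟩ := Submodule.mem_sup.mp haCX
    have hxmem : x ∈ (L ⊔ C) ⊓ X := by
      refine ⟨?_, hx⟩
      have : x = (c + x) - c := by abel
      rw [this]
      exact Submodule.sub_mem _ (Submodule.mem_sup_left haL) (Submodule.mem_sup_right hc)
    rw [hX] at hxmem
    simp only [Submodule.mem_bot] at hxmem
    subst hxmem
    rw [add_zero] at haL ⊢
    have : c ∈ L ⊓ C := ⟨haL, hc⟩
    rwa [hmax.prop] at this
  have hCX : C ⊔ X = C := hmax.eq_of_le hLCX le_sup_left |>.symm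
  rw [eq_bot_iff]
  intro x hx
  have hxC : x ∈ C := hCX ▸ Submodule.mem_sup_right hx
  have : x ∈ (L ⊔ C) ⊓ X := ⟨Submodule.mem_sup_right hxC, hx⟩
  rwa [hX] at this

end Generic

section Factor
variable {R : Type v} [Ring R]

lemma exists_factor {A : Type*} {B : Type*} {C : Type*} [AddCommGroup A] [AddCommGroup B]
    [AddCommGroup C] [Module R A] [Module R B] [Module R C]
    (S : Submodule R A) (φ : A →ₗ[R] B) (h : ↥S →ₗ[R] C)
    (key : ∀ s t : ↥S, φ s = φ t → h s = h t) :
    ∃ f' : ↥(S.map φ) →ₗ[R] C, ∀ (s : ↥S) (hm : φ s ∈ S.map φ), f' ⟨φ s, hm⟩ = h s := by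
  classical
  have sel : ∀ m : ↥(S.map φ), ∃ s : ↥S, φ s = (m : B) := by
    rintro ⟨m, hm⟩
    obtain ⟨s, hs, rfl⟩ := hm
    exact ⟨⟨s, hs⟩, rfl⟩
  choose sl hsl using sel
  refine ⟨{ toFun := fun m => h (sl m), map_add' := ?_, map_smul' := ?_ }, ?_⟩
  · intro a b
    have h1 : h (sl (a + b)) = h (sl a + sl b) := by
      apply key
      simp [hsl]
    show h (sl (a + b)) = h (sl a) + h (sl b)
    rw [h1, map_add]
  · intro c a
    have h1 : h (sl (c • a)) = h (c • sl a) := by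
      apply key
      simp [hsl]
    show h (sl (c • a)) = (RingHom.id R) c • h (sl a)
    rw [h1, map_smul]
    rfl
  · intro s hm
    exact key _ _ (by rw [hsl ⟨φ s, hm⟩])

end Factor

section Power
variable {R : Type v} [Ring R] {M : Type u} [AddCommGroup M] [Module R M] {n : ℕ}

/-- coordinates `≥ j` vanish -/
def Ucut (R : Type v) [Ring R] {M : Type u} [AddCommGroup M] [Module R M] (n j : ℕ) :
    Submodule R (Fin n → M) where
  carrier := {x | ∀ i : Fin n, j ≤ (i : ℕ) → x i = 0}
  add_mem' := by
    intro a b ha hb i hi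
    show a i + b i = 0
    rw [ha i hi, hb i hi, add_zero]
  zero_mem' := fun i _ => rfl
  smul_mem' := by
    intro c x hx i hi
    show c • x i = 0
    rw [hx i hi, smul_zero]

/-- keep coordinates `< j`, zero out the rest -/
def cutMap (R : Type v) [Ring R] {M : Type u} [AddCommGroup M] [Module R M] (n j : ℕ) :
    (Fin n → M) →ₗ[R] (Fin n → M) where
  toFun x := fun i => if (i : ℕ) < j then x i else 0
  map_add' a b := by
    funext i
    by_cases h : (i : ℕ) < j <;> simp [h]
  map_smul' c x := by
    funext i
    by_cases h : (i : ℕ) < j <;> simp [h]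

lemma MI (hqi : QuasiInjective R M) (j : ℕ) :
    ∀ S : Submodule R (Fin n → M), S ≤ Ucut R n j → ∀ f : ↥S →ₗ[R] M,
      ∃ g : (Fin n → M) →ₗ[R] M, ∀ x : ↥S, g x = f x := by
  induction j with
  | zero =>
    intro S hS f
    refine ⟨0, fun x => ?_⟩
    have hx0 : x = 0 := Subtype.ext (funext fun i => hS x.2 i (Nat.zero_le _))
    rw [hx0]
    simp
  | succ j ih =>
    intro S hS f
    by_cases hj : j < n
    · set jf : Fin n := ⟨j, hj⟩ with hjf
      set S' : Submodule R (Fin n → M) := S ⊓ Ucut R n j with hS'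
      obtain ⟨g₀, hg₀⟩ := ih S' inf_le_right (f.comp (Submodule.inclusion (inf_le_left : S ⊓ Ucut R n j ≤ S)))
      set π : (Fin n → M) →ₗ[R] (Fin n → M) := cutMap R n j with hπdef
      set h : ↥S →ₗ[R] M := f - g₀.comp (π.comp S.subtype) with hhdef
      have key : ∀ s t : ↥S, ((LinearMap.proj (R := R) (φ := fun _ : Fin n => M) jf)) (s : Fin n → M) = ((LinearMap.proj (R := R) (φ := fun _ : Fin n => M) jf)) (t : Fin n → M) → h s = h t := by
        intro s t hst
        have hst' : (s : Fin n → M) jf = (t : Fin n → M) jf := hst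
        have hmem : ((s - t : ↥S) : Fin n → M) ∈ Ucut R n j := by
          intro i hi
          show (s : Fin n → M) i - (t : Fin n → M) i = 0
          rcases Nat.lt_or_ge (i : ℕ) (j + 1) with hlt | hge
          · have hij : i = jf := Fin.ext (le_antisymm (Nat.lt_succ_iff.mp hlt) hi)
            rw [hij, hst', sub_self]
          · rw [hS s.2 i hge, hS t.2 i hge, sub_zero]
        have hπfix : π ((s - t : ↥S) : Fin n → M) = ((s - t : ↥S) : Fin n → M) := by
          funext i
          show (if (i : ℕ) < j then ((s - t : ↥S) : Fin n → M) i else 0) = _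
          by_cases hlt : (i : ℕ) < j
          · simp [hlt]
          · simp only [hlt, if_false]
            exact (hmem i (Nat.le_of_not_lt hlt)).symm
        have hy : ((s - t : ↥S) : Fin n → M) ∈ S' := ⟨(s - t).2, hmem⟩
        have h0 : h (s - t) = 0 := by
          have e1 : h (s - t) = f (s - t) - g₀ (π ((s - t : ↥S) : Fin n → M)) := rfl
          rw [e1, hπfix]
          have e2 := hg₀ ⟨((s - t : ↥S) : Fin n → M), hy⟩
          have e3 : (Submodule.inclusion (inf_le_left : S ⊓ Ucut R n j ≤ S))
              ⟨((s - t : ↥S) : Fin n → M), hy⟩ = s - t := Subtype.ext rfl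
          rw [LinearMap.comp_apply, e3] at e2
          rw [e2, sub_self]
        have := map_sub h s t
        rw [h0] at this
        exact (sub_eq_zero.mp this.symm)
      obtain ⟨f', hf'⟩ := exists_factor S ((LinearMap.proj (R := R) (φ := fun _ : Fin n => M) jf)) h key
      obtain ⟨g', hg'⟩ := hqi (S.map ((LinearMap.proj (R := R) (φ := fun _ : Fin n => M) jf))) f'
      refine ⟨g₀.comp π + g'.comp ((LinearMap.proj (R := R) (φ := fun _ : Fin n => M) jf)), fun s => ?_⟩
      have hmem : ((LinearMap.proj (R := R) (φ := fun _ : Fin n => M) jf)) (s : Fin n → M) ∈ S.map ((LinearMap.proj (R := R) (φ := fun _ : Fin n => M) jf)) :=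
        ⟨s, s.2, rfl⟩
      have e1 : g' (((LinearMap.proj (R := R) (φ := fun _ : Fin n => M) jf)) (s : Fin n → M)) = h s := by
        rw [hg' ⟨((LinearMap.proj (R := R) (φ := fun _ : Fin n => M) jf)) (s : Fin n → M), hmem⟩, hf' s hmem]
      show g₀ (π (s : Fin n → M)) + g' (((LinearMap.proj (R := R) (φ := fun _ : Fin n => M) jf)) (s : Fin n → M)) = f s
      rw [e1]
      show g₀ (π (s : Fin n → M)) + (f s - g₀ (π ((s : Fin n → M)))) = f s
      abel
    · have hS' : S ≤ Ucut R n j := by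
        intro x _ i hi
        exact absurd (lt_of_le_of_lt hi i.isLt) hj
      exact ih S hS' f

lemma MInj (hqi : QuasiInjective R M) (S : Submodule R (Fin n → M)) (f : ↥S →ₗ[R] M) :
    ∃ g : (Fin n → M) →ₗ[R] M, ∀ x : ↥S, g x = f x := by
  refine MI hqi n S ?_ f
  intro x _ i hi
  exact absurd (lt_of_le_of_lt hi i.isLt) (lt_irrefl _)

lemma ExtN (hqi : QuasiInjective R M) (S : Submodule R (Fin n → M))
    (f : ↥S →ₗ[R] (Fin n → M)) :
    ∃ g : (Fin n → M) →ₗ[R] (Fin n → M), ∀ x : ↥S, g x = f x := by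
  have h : ∀ i : Fin n, ∃ g : (Fin n → M) →ₗ[R] M,
      ∀ x : ↥S, g x = (LinearMap.proj (R := R) (φ := fun _ : Fin n => M) i).comp f x :=
    fun i => MInj hqi S ((LinearMap.proj (R := R) (φ := fun _ : Fin n => M) i).comp f)
  choose gs hgs using h
  refine ⟨LinearMap.pi gs, fun x => funext fun i => ?_⟩
  exact hgs i x

lemma vanish (hpoly : Polyform R M) (F : (Fin n → M) →ₗ[R] (Fin n → M))
    (E : Submodule R (Fin n → M)) (hE : EssentialSub R E)
    (hF : ∀ x ∈ E, F x = 0) : F = 0 := by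
  classical
  have hsingle : ∀ (jf : Fin n) (m : M), F (Pi.single jf m) = 0 := by
    intro jf
    set Ej : Submodule R M := E.comap (LinearMap.single R (fun _ : Fin n => M) jf) with hEj
    have hEjEss : EssentialSub R Ej := by
      intro X hX
      have hX' : E ⊓ X.map (LinearMap.single R (fun _ : Fin n => M) jf) = ⊥ := by
        rw [eq_bot_iff]
        rintro v ⟨hvE, hvX⟩
        obtain ⟨x, hx, rfl⟩ := hvX
        have : x ∈ Ej ⊓ X := ⟨hvE, hx⟩
        rw [hX] at this
        simp only [Submodule.mem_bot] at this
        subst this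
        simp
      have := hE _ hX'
      rw [eq_bot_iff]
      intro x hx
      have hmem : LinearMap.single R (fun _ : Fin n => M) jf x ∈
          X.map (LinearMap.single R (fun _ : Fin n => M) jf) := ⟨x, hx, rfl⟩
      rw [this] at hmem
      simp only [Submodule.mem_bot] at hmem
      have := congrFun (hmem : (Pi.single jf x : Fin n → M) = 0) jf
      simpa using this
    intro m
    funext i
    set φ : ↥(⊤ : Submodule R M) →ₗ[R] M :=
      ((LinearMap.proj (R := R) (φ := fun _ : Fin n => M) i).comp (F.comp (LinearMap.single R (fun _ : Fin n => M) jf))).comp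
        (⊤ : Submodule R M).subtype with hφ
    have hφ0 : φ = 0 := by
      refine hpoly Ej hEjEss ⊤ le_top φ ?_
      intro x hx
      show (LinearMap.proj (R := R) (φ := fun _ : Fin n => M) i) (F (LinearMap.single R (fun _ : Fin n => M) jf x)) = 0
      rw [hF _ hx]
      rfl
    have := congrArg (fun ψ => ψ (⟨m, trivial⟩ : ↥(⊤ : Submodule R M))) hφ0
    simpa [hφ] using this
  refine LinearMap.ext fun x => ?_
  have hx : x = ∑ i : Fin n, Pi.single i (x i) := (Finset.univ_sum_single x).symm
  rw [LinearMap.zero_apply, hx, map_sum]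
  refine Finset.sum_eq_zero fun i _ => hsingle i (x i)
end Power

section Main
variable {R : Type v} [Ring R] {M : Type u} [AddCommGroup M] [Module R M] {n : ℕ}

lemma range_isDirectSummand (hqi : QuasiInjective R M) (hpoly : Polyform R M)
    (f : (Fin n → M) →ₗ[R] (Fin n → M)) : IsDirectSummand R (LinearMap.range f) := by
  obtain ⟨K, hdisj, hess⟩ := compl_exists (LinearMap.ker f)
  have key : ∀ s t : ↥K, f s = f t → K.subtype s = K.subtype t := by
    intro s t hst
    have hmem : (s : Fin n → M) - t ∈ LinearMap.ker f ⊓ K :=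
      Submodule.mem_inf.mpr ⟨LinearMap.mem_ker.mpr (by rw [map_sub, hst, sub_self]),
        sub_mem s.2 t.2⟩
    rw [hdisj, Submodule.mem_bot] at hmem
    exact sub_eq_zero.mp hmem
  obtain ⟨h', hh'⟩ := exists_factor K f K.subtype key
  obtain ⟨g, hg⟩ := ExtN hqi (K.map f) h'
  have hgk : ∀ x ∈ K, g (f x) = x := by
    intro x hx
    have hm : f x ∈ K.map f := ⟨x, hx, rfl⟩
    have e1 := hg ⟨f x, hm⟩
    have e2 := hh' ⟨x, hx⟩ hm
    exact e1.trans e2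
  have hDzero : f ∘ₗ (g ∘ₗ f) - f = 0 := by
    refine vanish hpoly _ (LinearMap.ker f ⊔ K) hess ?_
    intro x hx
    obtain ⟨a, ha, b, hb, rfl⟩ := Submodule.mem_sup.mp hx
    have hfa : f a = 0 := ha
    show f (g (f (a + b))) - f (a + b) = 0
    rw [map_add, hfa, zero_add, hgk b hb, sub_self]
  have hfgf : ∀ x, f (g (f x)) = f x := by
    intro x
    have := LinearMap.ext_iff.mp hDzero x
    simpa [sub_eq_zero] using this
  set e := f ∘ₗ g with he
  have hee : ∀ x, e (e x) = e x := fun x => hfgf (g x)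
  have hrange : LinearMap.range e = LinearMap.range f := by
    apply le_antisymm
    · rintro _ ⟨x, rfl⟩; exact ⟨g x, rfl⟩
    · rintro _ ⟨x, rfl⟩; exact ⟨f x, hfgf x⟩
  have hcompl : IsCompl (LinearMap.range e) (LinearMap.ker e) := by
    constructor
    · rw [disjoint_iff, eq_bot_iff]
      rintro x ⟨⟨y, rfl⟩, hk⟩
      have hk' : e (e y) = 0 := hk
      rw [hee y] at hk'
      simp [hk']
    · rw [codisjoint_iff, eq_top_iff]
      intro x _
      have : x = e x + (x - e x) := by abel
      rw [this]
      refine Submodule.add_mem_sup ⟨x, rfl⟩ ?_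
      show e (x - e x) = 0
      rw [map_sub, hee x, sub_self]
  exact ⟨LinearMap.ker e, hrange ▸ hcompl⟩

lemma ssp (hqi : QuasiInjective R M) (hpoly : Polyform R M) (K L : Submodule R (Fin n → M))
    (hK : IsDirectSummand R K) (hL : IsDirectSummand R L) : IsDirectSummand R (K ⊔ L) := by
  obtain ⟨K', hKK'⟩ := hK
  obtain ⟨L', hLL'⟩ := hL
  set πK' : (Fin n → M) →ₗ[R] (Fin n → M) :=
    K'.subtype ∘ₗ (K'.projectionOnto K hKK'.symm) with hπdef
  set ρ : (Fin n → M) →ₗ[R] (Fin n → M) :=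
    L.subtype ∘ₗ (L.projectionOnto L' hLL') with hρdef
  have hπmem : ∀ x, πK' x ∈ K' := fun x => ((K'.projectionOnto K hKK'.symm) x).2
  have hπleft : ∀ x ∈ K', πK' x = x := by
    intro x hx
    show (K'.subtype) ((K'.projectionOnto K hKK'.symm) x) = x
    rw [show x = ((⟨x, hx⟩ : ↥K') : Fin n → M) from rfl,
      Submodule.projectionOnto_apply_left hKK'.symm ⟨x, hx⟩]
    rfl
  have hπright : ∀ x ∈ K, πK' x = 0 := by
    intro x hx
    show (K'.subtype) ((K'.projectionOnto K hKK'.symm) x) = 0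
    rw [show x = ((⟨x, hx⟩ : ↥K) : Fin n → M) from rfl,
      Submodule.projectionOnto_apply_right hKK'.symm ⟨x, hx⟩]
    rfl
  have hsub : ∀ x, x - πK' x ∈ K := by
    intro x
    have hx : x ∈ K ⊔ K' := by
      rw [codisjoint_iff.mp hKK'.codisjoint]; trivial
    obtain ⟨k, hk, k', hk', hxe⟩ := Submodule.mem_sup.mp hx
    have hπx : πK' x = k' := by
      rw [← hxe, map_add, hπright k hk, hπleft k' hk', zero_add]
    rw [hπx, ← hxe]
    simpa using hk
  have hρleft : ∀ x ∈ L, ρ x = x := by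
    intro x hx
    show (L.subtype) ((L.projectionOnto L' hLL') x) = x
    rw [show x = ((⟨x, hx⟩ : ↥L) : Fin n → M) from rfl,
      Submodule.projectionOnto_apply_left hLL' ⟨x, hx⟩]
    rfl
  have hρmem : ∀ x, ρ x ∈ L := fun x => ((L.projectionOnto L' hLL') x).2
  set φ : (Fin n → M) →ₗ[R] (Fin n → M) := πK' ∘ₗ ρ with hφdef
  obtain ⟨Q, hPQ⟩ := range_isDirectSummand hqi hpoly φ
  set P := LinearMap.range φ with hPdef
  have hPK' : P ≤ K' := by
    rintro _ ⟨x, rfl⟩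
    exact hπmem (ρ x)
  have hKL : K ⊔ P = K ⊔ L := by
    apply le_antisymm
    · refine sup_le le_sup_left ?_
      rintro _ ⟨x, rfl⟩
      have : φ x = ρ x - (ρ x - πK' (ρ x)) := by show πK' (ρ x) = _; abel
      rw [this]
      exact sub_mem (Submodule.mem_sup_right (hρmem x)) (Submodule.mem_sup_left (hsub (ρ x)))
    · refine sup_le le_sup_left ?_
      intro l hl
      have h1 : l = (l - πK' l) + πK' l := by abel
      have h2 : πK' l ∈ P := ⟨l, by show πK' (ρ l) = πK' l; rw [hρleft l hl]⟩
      rw [h1]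
      exact Submodule.add_mem_sup (hsub l) h2
  have hcompl : IsCompl (K ⊔ P) (Q ⊓ K') := by
    constructor
    · rw [disjoint_iff]
      have h1 : (K ⊔ P) ⊓ K' = P := by
        rw [sup_comm, sup_inf_assoc_of_le K hPK', disjoint_iff.mp hKK'.disjoint, sup_bot_eq]
      rw [inf_comm Q K', ← inf_assoc, h1, disjoint_iff.mp hPQ.disjoint]
    · rw [codisjoint_iff]
      rw [sup_assoc, ← sup_inf_assoc_of_le Q hPK', codisjoint_iff.mp hPQ.codisjoint,
        top_inf_eq, codisjoint_iff.mp hKK'.codisjoint]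
  exact ⟨Q ⊓ K', hKL ▸ hcompl⟩

lemma mainC (hqi : QuasiInjective R M) (hpoly : Polyform R M)
    (hlat : LatticeH R (Fin n → M)) (D D' : Submodule R (Fin n → M))
    (hDD' : IsCompl D D') : HSuppOn R D := by
  intro X hXD
  obtain ⟨E, hEsummand, c1, c2⟩ := hlat X
  have hG : IsDirectSummand R (E ⊔ D') := ssp hqi hpoly E D' hEsummand ⟨D, hDD'.symm⟩
  obtain ⟨G', hGG'⟩ := hG
  set G := E ⊔ D' with hGdef
  set F := G ⊓ D with hFdef
  have hFD : F ≤ D := inf_le_right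
  have hD'G : D' ≤ G := le_sup_right
  have hD'F : D' ⊔ F = G := by
    rw [hFdef, inf_comm, ← sup_inf_assoc_of_le D hD'G,
      codisjoint_iff.mp hDD'.symm.codisjoint, top_inf_eq]
  have hFcompl : IsCompl F (D' ⊔ G') := by
    constructor
    · rw [disjoint_iff, eq_bot_iff]
      rintro x ⟨hxF, hxDG⟩
      obtain ⟨d', hd', g', hg', hxe⟩ := Submodule.mem_sup.mp hxDG
      have hg'G : g' ∈ G ⊓ G' := by
        refine ⟨?_, hg'⟩
        have : g' = x - d' := by rw [← hxe]; abel
        rw [this]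
        exact sub_mem hxF.1 (hD'G hd')
      rw [disjoint_iff.mp hGG'.disjoint, Submodule.mem_bot] at hg'G
      subst hg'G
      rw [add_zero] at hxe
      subst hxe
      have : d' ∈ D ⊓ D' := ⟨hxF.2, hd'⟩
      rwa [disjoint_iff.mp hDD'.disjoint, Submodule.mem_bot] at this
    · rw [codisjoint_iff, ← sup_assoc, sup_comm F D', hD'F,
        codisjoint_iff.mp hGG'.codisjoint]
  refine ⟨F, hFD, ⟨(D' ⊔ G') ⊓ D, inf_le_right, ?_, ?_⟩, ?_, ?_⟩
  · rw [eq_bot_iff]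
    intro x hx
    have : x ∈ F ⊓ (D' ⊔ G') := ⟨hx.1, hx.2.1⟩
    rwa [disjoint_iff.mp hFcompl.disjoint] at this
  · rw [← sup_inf_assoc_of_le _ hFD, codisjoint_iff.mp hFcompl.codisjoint, top_inf_eq]
  · intro Y hFY hYD hXY
    have hEG : E ≤ G := le_sup_left
    have hEYD' : E ≤ Y ⊔ D' := by
      refine le_trans hEG ?_
      rw [← hD'F]
      exact sup_le (le_sup_right) (le_trans hFY le_sup_left)
    have hXYD' : X ⊔ (Y ⊔ D') = ⊤ := by
      rw [← sup_assoc, hXY, codisjoint_iff.mp hDD'.codisjoint]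
    have htop := c1 (Y ⊔ D') hEYD' hXYD'
    have : (Y ⊔ D') ⊓ D = Y := by
      rw [sup_inf_assoc_of_le D' hYD, disjoint_iff.mp hDD'.symm.disjoint, sup_bot_eq]
    rw [← this, htop, top_inf_eq]
  · intro Y hXY hYD hFY
    have hXYD' : X ≤ Y ⊔ D' := le_trans hXY le_sup_left
    have hEYD' : E ⊔ (Y ⊔ D') = ⊤ := by
      have h1 : G ⊔ Y = ⊤ := by
        rw [← hD'F, sup_assoc, hFY, sup_comm D' D, codisjoint_iff.mp hDD'.codisjoint]
      rw [hGdef, sup_assoc, sup_comm D' Y] at h1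
      exact h1
    have htop := c2 (Y ⊔ D') hXYD' hEYD'
    have : (Y ⊔ D') ⊓ D = Y := by
      rw [sup_inf_assoc_of_le D' hYD, disjoint_iff.mp hDD'.symm.disjoint, sup_bot_eq]
    rw [← this, htop, top_inf_eq]
end Main


theorem stmt6 {R : Type v} [Ring R] {M : Type u} [AddCommGroup M] [Module R M]
    (hqi : QuasiInjective R M) (hpoly : Polyform R M) (n : ℕ) :
    HSupplemented R (Fin n → M) ↔
      ∀ D : Submodule R (Fin n → M), IsDirectSummand R D → HSupplemented R ↥D := by
  constructor
  · intro hH D hD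
    obtain ⟨D', hDD'⟩ := hD
    have hlat := (hsupp_iff_latticeH).mp hH
    have hOn := mainC hqi hpoly hlat D D' hDD'
    exact (hsupp_iff_latticeH).mpr ((latticeH_subtype_iff D).mpr hOn)
  · intro h
    have h1 : HSupplemented R ↥(⊤ : Submodule R (Fin n → M)) := h ⊤ ⟨⊥, isCompl_top_bot⟩
    have h2 : HSuppOn R (⊤ : Submodule R (Fin n → M)) :=
      (latticeH_subtype_iff ⊤).mp ((hsupp_iff_latticeH).mp h1)
    apply (hsupp_iff_latticeH).mpr
    intro X
    obtain ⟨F, _, ⟨F', _, hinf, hsup⟩, c1, c2⟩ := h2 X le_top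
    refine ⟨F, ⟨F', ⟨disjoint_iff.mpr hinf, codisjoint_iff.mpr hsup⟩⟩, ?_, ?_⟩
    · intro Y hFY hXY
      exact c1 Y hFY le_top hXY
    · intro Y hXY hFY
      exact c2 Y hXY le_top hFY
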